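/- Let G be a group, M a G-set, and let ≤ be a well-order (a linear order whose strict order is well-founded) on M. Let z ∈ P(P(M)) be the set of all lower sets of (M, ≤) (equivalently, all initial segments, including M itself). Then the stabilizer of z under the G-action on P(P(M)) equals the kernel G_M = {g ∈ G : ∀ m ∈ M, g • m = m} of the action of G on M. -/
import Mathlib


open Pointwise

theorem stabilizer_of_lowerSets_eq_kernel
    {G : Type*} [Group G] (M : Type*) [MulAction G M] [LinearOrder M]
    (hwf : WellFounded ((· < ·) : M → M → Prop)) :
    {g : G | g • ({S : Set M | IsLowerSet S} : Set (Set M)) = {S : Set M | IsLowerSet S}} =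
      {g : G | ∀ m : M, g • m = m} := by
  ext g
  simp only [Set.mem_setOf_eq]
  constructor
  · intro hg
    have hlow : ∀ S : Set M, IsLowerSet S → IsLowerSet (g • S) := by
      intro S hS
      have h1 : g • S ∈ g • ({S : Set M | IsLowerSet S} : Set (Set M)) :=
        Set.smul_mem_smul_set hS
      rw [hg] at h1
      exact h1
    intro m
    induction m using hwf.induction with
    | _ m ih =>
      have hIio : g • Set.Iio m = Set.Iio m := by
        ext y
        constructor
        · rintro ⟨x, hx, rfl⟩
          dsimp only
          rw [ih x hx]; exact hx
        · intro hy
          exact ⟨y, hy, ih y hy⟩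
      have hIic : IsLowerSet (g • Set.Iic m) := hlow _ (isLowerSet_Iic m)
      rcases lt_trichotomy (g • m) m with h | h | h
      · have hmem : g • m ∈ g • Set.Iio m := by rw [hIio]; exact h
        rcases hmem with ⟨x, hx, hxe⟩
        have hxm : x = m := smul_left_cancel g hxe
        exact absurd (hxm ▸ hx) (lt_irrefl m)
      · exact h
      · have hm : g • m ∈ g • Set.Iic m := Set.smul_mem_smul_set (le_refl m)
        have hm' : m ∈ g • Set.Iic m := hIic h.le hm
        rcases hm' with ⟨x, hx, hxe⟩
        dsimp only at hxe
        rcases hx.lt_or_eq with hx' | rfl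
        · rw [ih x hx'] at hxe
          exact absurd hxe hx'.ne
        · exact absurd hxe h.ne'
  · intro hg
    have hfix : ∀ S : Set M, g • S = S := by
      intro S
      ext x
      constructor
      · rintro ⟨y, hy, rfl⟩; dsimp only; rw [hg y]; exact hy
      · intro hx; exact ⟨x, hx, hg x⟩
    ext S
    constructor
    · rintro ⟨T, hT, rfl⟩
      dsimp only
      rw [hfix T]; exact hT
    · intro hS
      exact ⟨S, hS, hfix S⟩
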